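/- Let m₀ < m be natural numbers, let η : ℕ → ℝ, and define 𝒴 : ℕ → ℂ by 𝒴(m₀) = 1 and 𝒴(k) = 𝒴(k−1)·(1 + i·η(k)) for k ≥ m₀ + 1. Then 2·log|𝒴(m)| = ∑_{k=m₀+1}^{m} log(1 + η(k)²). -/

import Mathlib

lemma step_log (η : ℝ) : 2 * Real.log ‖1 + Complex.I * (η : ℂ)‖
    = Real.log (1 + η ^ 2) := by
  have habs : ‖1 + Complex.I * (η : ℂ)‖ = Real.sqrt (1 + η ^ 2) := by
    rw [Complex.norm_def, Complex.normSq_apply]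
    simp [Complex.add_re, Complex.add_im]
    ring_nf
  rw [habs, Real.log_sqrt (by positivity)]
  ring

lemma factor_ne (η : ℝ) : (1 + Complex.I * (η : ℂ)) ≠ 0 := by
  intro h
  have := congrArg Complex.re h
  simp at this

/-- Discrete-time counterpart of Theorem 1: twice the log-modulus of the terminal
value of the discretized process equals `∑ log(1 + η(k)²)`. -/
theorem two_log_abs_discretized_process
    (m₀ m : ℕ) (hm : m₀ < m) (η : ℕ → ℝ) (𝒴 : ℕ → ℂ)
    (h0 : 𝒴 m₀ = 1)
    (hrec : ∀ k, m₀ + 1 ≤ k → 𝒴 k = 𝒴 (k - 1) * (1 + Complex.I * (η k : ℂ))) :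
    2 * Real.log ‖𝒴 m‖
      = ∑ k ∈ Finset.Icc (m₀ + 1) m, Real.log (1 + η k ^ 2) := by
  have hne : ∀ k, m₀ ≤ k → 𝒴 k ≠ 0 := by
    intro k hk
    induction k, hk using Nat.le_induction with
    | base => simp [h0]
    | succ n hn ih =>
      rw [hrec (n + 1) (by omega)]
      simp only [Nat.add_sub_cancel]
      exact mul_ne_zero ih (factor_ne _)
  induction m, hm using Nat.le_induction with
  | base =>
    rw [hrec (m₀ + 1) le_rfl]
    simp only [Nat.add_sub_cancel, h0, one_mul, Finset.Icc_self, Finset.sum_singleton]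
    exact step_log (η (m₀ + 1))
  | succ n hn ih =>
    rw [hrec (n + 1) (by omega)]
    simp only [Nat.add_sub_cancel, norm_mul]
    rw [Real.log_mul (by simpa using hne n (by omega)) (by simpa using factor_ne (η (n + 1)))]
    rw [Finset.sum_Icc_succ_top (by omega), ← ih]
    have := step_log (η (n + 1))
    ring_nf
    ring_nf at this
    linarith
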